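/- Let 𝓜 ⊆ M_n(ℂ) be a unital *-subalgebra, σ ∈ 𝓜 a positive-definite density matrix, φ = tr(σ ·), and E : M_n(ℂ) → 𝓜 the φ-preserving conditional expectation. If L(x) = k* x + x k − Φ(E(x)) where k ∈ 𝓜, Φ : 𝓜 → 𝓜 is completely positive with Φ(1) = k + k*, then L(1) = 0 and L is conditionally negative definite on M_n(ℂ). -/

import Mathlib

open scoped ComplexOrder
open Matrix Complex

abbrev Mat (n : ℕ) := Matrix (Fin n) (Fin n) ℂ

/-- Complete positivity of a map on `M_n(ℂ)`: all sums `∑ xⱼ* P(aⱼ* aₖ) xₖ`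
are positive semidefinite. -/
def IsCP {n : ℕ} (P : Mat n → Mat n) : Prop :=
  ∀ (m : ℕ) (a x : Fin m → Mat n),
    (∑ j, ∑ k, (x j)ᴴ * P ((a j)ᴴ * a k) * x k).PosSemidef

/-- GNS-symmetry of `P` with respect to the state `φ = tr(σ ·)`. -/
def IsGNSSymm {n : ℕ} (σ : Mat n) (P : Mat n → Mat n) : Prop :=
  ∀ x y : Mat n, (σ * (P x)ᴴ * y).trace = (σ * xᴴ * P y).trace

/-- Complex power `σ^z` of a positive definite matrix, via the spectral
decomposition. -/
noncomputable def mpow {n : ℕ} {σ : Mat n} (hσ : σ.PosDef) (z : ℂ) : Mat n :=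
  (hσ.1.eigenvectorUnitary : Mat n) *
    Matrix.diagonal (fun i => (hσ.1.eigenvalues i : ℂ) ^ z) *
    star (hσ.1.eigenvectorUnitary : Mat n)

/-- the Christensen–Evans-form extension
`L(x) = k* x + x k − Φ(E(x))` (with `k ∈ 𝓜`, `Φ` completely positive on `𝓜`
with `Φ(1) = k + k*`, and `E` the φ-preserving conditional expectation onto
`𝓜`) satisfies `L(1) = 0` and is conditionally negative definite. -/
lemma psd_of_quadform {ι : Type*} [Fintype ι] [DecidableEq ι]
    (M : Matrix ι ι ℂ) (h : ∀ v : ι → ℂ, 0 ≤ star v ⬝ᵥ M *ᵥ v) :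
    M.PosSemidef := by
  have him : ∀ v : ι → ℂ, (star v ⬝ᵥ M *ᵥ v).im = 0 := by
    intro v
    have := h v
    rw [Complex.le_def] at this
    exact this.2.symm
  refine posSemidef_iff_dotProduct_mulVec.mpr ⟨?_, ?_⟩
  · -- Hermitian
    set f : (ι → ℂ) → (ι → ℂ) → ℂ := fun x y => star x ⬝ᵥ M *ᵥ y with hf
    have hexp : ∀ x y : ι → ℂ, f (x + y) (x + y) = f x x + f x y + f y x + f y y := by
      intro x y
      simp only [hf, star_add, add_dotProduct, mulVec_add, dotProduct_add]
      ring
    have hsmul : ∀ (c : ℂ) (x y : ι → ℂ), f (c • x) y = (starRingEnd ℂ) c * f x y := by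
      intro c x y
      simp [hf, star_smul, smul_dotProduct, smul_eq_mul, Complex.star_def]
    have hsmul' : ∀ (c : ℂ) (x y : ι → ℂ), f x (c • y) = c * f x y := by
      intro c x y
      simp [hf, mulVec_smul, dotProduct_smul, smul_eq_mul]
    have key : ∀ x y : ι → ℂ, f x y = (starRingEnd ℂ) (f y x) := by
      intro x y
      have h1 : (f x y + f y x).im = 0 := by
        have := him (x + y)
        rw [show star (x + y) ⬝ᵥ M *ᵥ (x + y) = f (x+y) (x+y) from rfl, hexp] at this
        have hx := him x; have hy := him y
        simp only [Complex.add_im] at this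
        rw [show star x ⬝ᵥ M *ᵥ x = f x x from rfl] at hx
        rw [show star y ⬝ᵥ M *ᵥ y = f y y from rfl] at hy
        rw [Complex.add_im]
        linarith
      have h2 : (f x y - f y x).re = 0 := by
        have := him (x + Complex.I • y)
        rw [show star (x + Complex.I • y) ⬝ᵥ M *ᵥ (x + Complex.I • y)
              = f (x + Complex.I • y) (x + Complex.I • y) from rfl, hexp,
            hsmul, hsmul', hsmul, hsmul'] at this
        have hx := him x; have hy := him y
        rw [show star x ⬝ᵥ M *ᵥ x = f x x from rfl] at hx
        rw [show star y ⬝ᵥ M *ᵥ y = f y y from rfl] at hy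
        simp only [Complex.add_im, Complex.mul_im, Complex.I_re, Complex.I_im,
          Complex.conj_I, Complex.neg_im, Complex.neg_re, Complex.mul_re,
          _root_.map_mul, RingHom.map_one] at this ⊢
        rw [Complex.sub_re]
        nlinarith [this, hx, hy]
      apply Complex.ext
      · have := h2; rw [Complex.sub_re] at this
        simp [Complex.conj_re]; linarith
      · have := h1; rw [Complex.add_im] at this
        simp [Complex.conj_im]; linarith
    ext i j
    rw [conjTranspose_apply]
    have hgen : ∀ p q, M p q = f (Pi.single p 1) (Pi.single q 1) := by
      intro p q
      simp [hf, mulVec_single, dotProduct, Pi.star_apply, Pi.single_apply,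
        apply_ite (starRingEnd ℂ), ite_mul, Finset.sum_ite_eq']
    rw [hgen i j, hgen j i, Complex.star_def]; exact (key _ _).symm
  · intro v; exact h v

lemma psd_sum {ι N : Type*} [Fintype N] (s : Finset ι) (g : ι → Matrix N N ℂ)
    (h : ∀ i ∈ s, (g i).PosSemidef) : (∑ i ∈ s, g i).PosSemidef := by
  classical
  induction s using Finset.induction_on with
  | empty => simpa using Matrix.PosSemidef.zero
  | insert _ _ hni ih =>
    rw [Finset.sum_insert hni]
    exact (h _ (Finset.mem_insert_self _ _)).add
      (ih fun i hi => h i (Finset.mem_insert_of_mem hi))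

lemma comp_cp_psd {n m : ℕ} (Φ E : Mat n →ₗ[ℂ] Mat n)
    (hΦ : IsCP Φ) (hE : IsCP E) (a x : Fin m → Mat n) :
    (∑ j, ∑ k, (x j)ᴴ * Φ (E ((a j)ᴴ * a k)) * x k).PosSemidef := by
  rcases n with _ | n'
  · refine posSemidef_iff_dotProduct_mulVec.mpr ⟨?_, ?_⟩
    · ext i j; exact absurd i.2 (Nat.not_lt_zero _)
    · intro v
      have h0 : (∑ j, ∑ k, (x j)ᴴ * Φ (E ((a j)ᴴ * a k)) * x k) *ᵥ v = 0 := by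
        ext i; exact absurd i.2 (Nat.not_lt_zero _)
      rw [h0]; simp
  · set z0 : Fin (n' + 1) := 0 with hz0
    set B : Matrix (Fin m × Fin (n' + 1)) (Fin m × Fin (n' + 1)) ℂ :=
      fun u w => E ((a u.1)ᴴ * a w.1) u.2 w.2 with hB
    have starsingle : star (Pi.single z0 (1:ℂ) : Fin (n'+1) → ℂ) = (Pi.single z0 1 : Fin (n'+1) → ℂ) := by
      ext t; by_cases ht : t = z0 <;> simp [ht, Pi.single_apply]
    have hBpsd : B.PosSemidef := by
      apply psd_of_quadform
      intro v
      set y : Fin m → Mat (n' + 1) :=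
        fun j => fun p q => if q = z0 then v (j, p) else 0 with hy
      have hpsd := hE m a y
      set Sm := ∑ j, ∑ k, (y j)ᴴ * E ((a j)ᴴ * a k) * y k with hSm
      have h1 : star (Pi.single z0 (1:ℂ) : Fin (n'+1) → ℂ) ⬝ᵥ Sm *ᵥ (Pi.single z0 1 : Fin (n'+1) → ℂ) = Sm z0 z0 := by
        rw [starsingle, mulVec_single, single_dotProduct]; simp
      have h2 : star v ⬝ᵥ B *ᵥ v = Sm z0 z0 := by
        simp only [hSm, Matrix.sum_apply, Matrix.mul_apply, conjTranspose_apply, hy, hB,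
          dotProduct, mulVec, Pi.star_apply, Fintype.sum_prod_type, if_pos rfl, if_true]
        simp only [Finset.mul_sum, Finset.sum_mul, mul_assoc]
        refine Finset.sum_congr rfl fun j _ => ?_
        rw [Finset.sum_comm]
        refine Finset.sum_congr rfl fun k _ => ?_
        erw [Matrix.mul_apply]; simp only [Matrix.mul_apply, conjTranspose_apply, if_pos rfl, Finset.sum_mul, mul_assoc]; rw [Finset.sum_comm]; rfl
      rw [h2, ← h1]
      exact hpsd.dotProduct_mulVec_nonneg _
    open scoped MatrixOrder in obtain ⟨D, hD⟩ := CStarAlgebra.nonneg_iff_eq_star_mul_self.mp hBpsd.nonneg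
    set c : (Fin m × Fin (n' + 1)) → Fin m → Mat (n' + 1) :=
      fun w j => fun r p => if r = z0 then D w (j, p) else 0 with hc
    have hdecomp : ∀ j k : Fin m, E ((a j)ᴴ * a k) = ∑ w, (c w j)ᴴ * (c w k) := by
      intro j k
      ext p q
      have h1 : E ((a j)ᴴ * a k) p q = B (j, p) (k, q) := rfl
      rw [h1, hD]
      simp only [Matrix.mul_apply, Matrix.sum_apply, conjTranspose_apply, hc]
      congr 1
      ext w
      erw [Matrix.mul_apply]
      rw [Finset.sum_eq_single z0]
      · rfl
      · intro b _ hb; simp [hb]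
      · intro hz; exact absurd (Finset.mem_univ _) hz
    have hswap : ∀ j k : Fin m, (x j)ᴴ * Φ (E ((a j)ᴴ * a k)) * x k
        = ∑ w, (x j)ᴴ * Φ ((c w j)ᴴ * (c w k)) * x k := by
      intro j k
      rw [hdecomp, map_sum, Finset.mul_sum, Finset.sum_mul]
    simp_rw [hswap]
    rw [show (∑ j, ∑ k, ∑ w, (x j)ᴴ * Φ ((c w j)ᴴ * (c w k)) * x k)
        = ∑ w, ∑ j, ∑ k, (x j)ᴴ * Φ ((c w j)ᴴ * (c w k)) * x k by
      rw [show (∑ j, ∑ k, ∑ w, (x j)ᴴ * Φ ((c w j)ᴴ * (c w k)) * x k)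
          = ∑ j, ∑ w, ∑ k, (x j)ᴴ * Φ ((c w j)ᴴ * (c w k)) * x k from
        Finset.sum_congr rfl fun j _ => Finset.sum_comm]
      exact Finset.sum_comm]
    exact psd_sum _ _ (fun w _ => hΦ m (c w) x)

theorem stmt_5 {n : ℕ} (S : StarSubalgebra ℂ (Mat n))
    (σ : Mat n) (hσS : σ ∈ S) (hσ : σ.PosDef) (htr : σ.trace = 1)
    (E : Mat n →ₗ[ℂ] Mat n)
    (hErange : ∀ x, E x ∈ S)
    (hE1 : E 1 = 1)
    (hECP : IsCP E)
    (hEbimod : ∀ a b x : Mat n, a ∈ S → b ∈ S → E (a * x * b) = a * E x * b)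
    (hEproj : ∀ x ∈ S, E x = x)
    (hEφ : ∀ x : Mat n, (σ * E x).trace = (σ * x).trace)
    (k : Mat n) (hk : k ∈ S)
    (Φ : Mat n →ₗ[ℂ] Mat n) (hΦS : ∀ x ∈ S, Φ x ∈ S) (hΦCP : IsCP Φ)
    (hΦ1 : Φ 1 = k + kᴴ)
    (L : Mat n → Mat n)
    (hL : ∀ x, L x = kᴴ * x + x * k - Φ (E x)) :
    L 1 = 0 ∧
      ∀ (m : ℕ) (a x : Fin m → Mat n), (∑ j, a j * x j) = 0 →
        (-(∑ j, ∑ l, (x j)ᴴ * L ((a j)ᴴ * a l) * x l)).PosSemidef := by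
  constructor
  · rw [hL, hE1, hΦ1, mul_one, one_mul]
    abel
  · intro m a x hsum
    have expand : ∀ j l : Fin m,
        (x j)ᴴ * L ((a j)ᴴ * a l) * x l
          = (a j * k * x j)ᴴ * (a l * x l) + (a j * x j)ᴴ * (a l * k * x l)
              - (x j)ᴴ * Φ (E ((a j)ᴴ * a l)) * x l := by
      intro j l
      rw [hL]
      simp only [conjTranspose_mul]
      noncomm_ring
    have key : (-(∑ j, ∑ l, (x j)ᴴ * L ((a j)ᴴ * a l) * x l))
        = ∑ j, ∑ l, (x j)ᴴ * Φ (E ((a j)ᴴ * a l)) * x l := by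
      simp_rw [expand]
      rw [show (∑ j, ∑ l, ((a j * k * x j)ᴴ * (a l * x l) + (a j * x j)ᴴ * (a l * k * x l)
              - (x j)ᴴ * Φ (E ((a j)ᴴ * a l)) * x l))
          = (∑ j, ∑ l, (a j * k * x j)ᴴ * (a l * x l))
            + (∑ j, ∑ l, (a j * x j)ᴴ * (a l * k * x l))
            - ∑ j, ∑ l, (x j)ᴴ * Φ (E ((a j)ᴴ * a l)) * x l by
        rw [← Finset.sum_add_distrib, ← Finset.sum_sub_distrib]
        refine Finset.sum_congr rfl fun j _ => ?_
        rw [← Finset.sum_add_distrib, ← Finset.sum_sub_distrib]]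
      have e1 : (∑ j, ∑ l, (a j * k * x j)ᴴ * (a l * x l)) = 0 := by
        rw [← Finset.sum_mul_sum, hsum, mul_zero]
      have e2 : (∑ j, ∑ l, (a j * x j)ᴴ * (a l * k * x l)) = 0 := by
        rw [← Finset.sum_mul_sum, ← conjTranspose_sum, hsum, conjTranspose_zero, zero_mul]
      rw [e1, e2]
      abel
    rw [key]
    exact comp_cp_psd Φ E hΦCP hECP a x
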